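/- Fix τ' < τ'' < τ, set S' = Ψ_F(S(τ')), choose parameters t_n ∈ I(p_n/q_n), and let H_n = Φ_F ∘ F_{t_n} ∘ Ψ_F on S(τ'). Then for all n large enough and for all k ≤ q_n, the iterate H_n^{∘k} is defined on S(τ') with H_n^{∘k}(S(τ')) ⊂ S(τ). Moreover sup_{w ∈ S(τ')} |H_n^{∘q_n}(w) − w − q_nθ| → 0 as n → ∞. -/

import Mathlib

open Filter Real Set Topology

/-- The open horizontal strip `S(τ) = {z ∈ ℂ : |Im z| < τ}`. -/
def Strip (τ : ℝ) : Set ℂ := {z : ℂ | |z.im| < τ}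

lemma strip_open (τ : ℝ) : IsOpen (Strip τ) :=
  isOpen_lt (continuous_abs.comp Complex.continuous_im) continuous_const

lemma strip_convex (τ : ℝ) : Convex ℝ (Strip τ) := by
  have : Strip τ = Complex.im ⁻¹' Ioo (-τ) τ := by
    ext z; simp [Strip, abs_lt, Set.mem_setOf_eq]
  rw [this]
  exact (convex_Ioo (-τ) τ).linear_preimage Complex.imLm

lemma strip_preconnected (τ : ℝ) : IsPreconnected (Strip τ) :=
  (strip_convex τ).isPreconnected

lemma mem_strip {τ : ℝ} {z : ℂ} : z ∈ Strip τ ↔ |z.im| < τ := Iff.rfl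

lemma add_int_mem_strip {τ : ℝ} {z : ℂ} (hz : z ∈ Strip τ) (n : ℤ) :
    z + (n : ℂ) ∈ Strip τ := by
  simpa [mem_strip] using hz

lemma psi_add_int {τ : ℝ} {Ψ : ℂ → ℂ}
    (hΨper : ∀ z ∈ Strip τ, Ψ (z + 1) = Ψ z + 1) :
    ∀ z ∈ Strip τ, ∀ n : ℤ, Ψ (z + (n : ℂ)) = Ψ z + (n : ℂ) := by
  intro z hz n
  induction n using Int.induction_on with
  | zero => simp
  | succ n ih =>
    have h1 := hΨper (z + (n : ℂ)) (add_int_mem_strip hz n)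
    push_cast
    push_cast at ih
    rw [show z + ((n : ℂ) + 1) = (z + (n : ℂ)) + 1 by ring, h1, ih]
    ring
  | pred n ih =>
    have h1 := hΨper (z + (-(n : ℂ) - 1)) (by have := add_int_mem_strip hz (-(n+1)); push_cast at this; convert this using 2; ring)
    push_cast at ih ⊢
    rw [show z + (-(n : ℂ) - 1) + 1 = z + (-(n:ℂ)) by ring, ih,
      show z + (-(n : ℂ) - 1) = z - n - 1 by ring] at h1
    rw [show z + (-(n:ℂ) - 1) = z - n - 1 by ring]
    linear_combination -h1

lemma deriv_psi_ne_zero {τ θ : ℝ} (hτ : 0 < τ) (hirr : Irrational θ)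
    {Ψ Fc : ℂ → ℂ}
    (hΨdiff : DifferentiableOn ℂ Ψ (Strip τ))
    (hΨper : ∀ z ∈ Strip τ, Ψ (z + 1) = Ψ z + 1)
    (hFcdiff : DifferentiableOn ℂ Fc (Ψ '' Strip τ))
    (hFclin : ∀ z ∈ Strip τ, Fc (Ψ z) = Ψ (z + (θ : ℂ))) :
    ∀ z ∈ Strip τ, deriv Ψ z ≠ 0 := by
  have hSo := strip_open τ
  by_contra hcon
  push_neg at hcon
  obtain ⟨z₀, hz₀, h0⟩ := hcon
  set g : ℂ → ℂ := deriv Ψ with hg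
  have hΨanal : AnalyticOnNhd ℂ Ψ (Strip τ) := hΨdiff.analyticOnNhd hSo
  have ganal : AnalyticOnNhd ℂ g (Strip τ) := hΨanal.deriv
  -- integer-translation invariance of `g`
  have gint : ∀ z ∈ Strip τ, ∀ m : ℤ, g (z + (m : ℂ)) = g z := by
    intro z hz m
    have h1 : deriv (fun w => Ψ (w + (m : ℂ))) z = deriv Ψ (z + (m : ℂ)) :=
      deriv_comp_add_const _ _ _
    have h2 : (fun w => Ψ (w + (m : ℂ))) =ᶠ[𝓝 z] fun w => Ψ w + (m : ℂ) := by
      filter_upwards [hSo.mem_nhds hz] with w hw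
      exact psi_add_int hΨper w hw m
    rw [h2.deriv_eq, deriv_add_const] at h1
    exact h1.symm
  -- propagation of zeros of `g` under translation by `θ`
  have gθ : ∀ z ∈ Strip τ, g z = 0 → g (z + (θ : ℂ)) = 0 := by
    intro z hz hz0
    have hΨat : DifferentiableAt ℂ Ψ z := hΨdiff.differentiableAt (hSo.mem_nhds hz)
    have h1 : HasDerivAt Ψ 0 z := by
      have := hΨat.hasDerivAt; rwa [show deriv Ψ z = 0 from hz0] at this
    have h1' : HasFDerivAt Ψ (0 : ℂ →L[ℂ] ℂ) z := by
      have := hasDerivAt_iff_hasFDerivAt.mp h1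
      rwa [show ContinuousLinearMap.toSpanSingleton ℂ (0 : ℂ) = 0 by ext x; simp] at this
    have hFcw : DifferentiableWithinAt ℂ Fc (Ψ '' Strip τ) (Ψ z) :=
      hFcdiff _ ⟨z, hz, rfl⟩
    have hcomp : HasFDerivWithinAt (Fc ∘ Ψ)
        ((fderivWithin ℂ Fc (Ψ '' Strip τ) (Ψ z)).comp (0 : ℂ →L[ℂ] ℂ))
        (Strip τ) z :=
      hFcw.hasFDerivWithinAt.comp z h1'.hasFDerivWithinAt (mapsTo_image Ψ _)
    rw [ContinuousLinearMap.comp_zero] at hcomp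
    have hcomp' : HasFDerivAt (Fc ∘ Ψ) 0 z := hcomp.hasFDerivAt (hSo.mem_nhds hz)
    have heq : (Fc ∘ Ψ) =ᶠ[𝓝 z] fun w => Ψ (w + (θ : ℂ)) := by
      filter_upwards [hSo.mem_nhds hz] with w hw
      exact hFclin w hw
    have h3 : HasFDerivAt (fun w => Ψ (w + (θ : ℂ))) 0 z :=
      hcomp'.congr_of_eventuallyEq heq.symm
    have h4 : deriv (fun w => Ψ (w + (θ : ℂ))) z = 0 := by
      simpa using h3.hasDerivAt.deriv
    rwa [deriv_comp_add_const] at h4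
  -- the orbit points
  have horbmem : ∀ n : ℕ, z₀ + (n : ℂ) * (θ : ℂ) ∈ Strip τ := by
    intro n
    simpa [mem_strip] using hz₀
  have gn : ∀ n : ℕ, g (z₀ + (n : ℂ) * (θ : ℂ)) = 0 := by
    intro n
    induction n with
    | zero => simpa using h0
    | succ n ih =>
      have := gθ _ (horbmem n) ih
      rw [show (((n+1) : ℕ) : ℂ) = (n : ℂ) + 1 by push_cast; ring]
      rwa [show z₀ + (n : ℂ) * θ + θ = z₀ + ((n : ℂ) + 1) * θ by ring] at this
  set w : ℕ → ℂ := fun n => z₀ + (n : ℂ) * (θ : ℂ) + ((-⌊z₀.re + (n : ℝ) * θ⌋ : ℤ) : ℂ)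
    with hw
  have wim : ∀ n, (w n).im = z₀.im := by intro n; simp [hw]
  have wstrip : ∀ n, w n ∈ Strip τ := by
    intro n; rw [mem_strip, wim]; exact hz₀
  have gw : ∀ n, g (w n) = 0 := fun n => by
    rw [hw]; rw [gint _ (horbmem n)]; exact gn n
  have wre : ∀ n, (w n).re = Int.fract (z₀.re + (n : ℝ) * θ) := by
    intro n
    rw [hw]
    push_cast
    simp only [Complex.add_re, Complex.mul_re, Complex.natCast_re, Complex.ofReal_re,
      Complex.natCast_im, Complex.ofReal_im, Complex.intCast_re, Complex.neg_re]
    rw [Int.fract]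
    push_cast
    ring
  have winj : Function.Injective w := by
    intro a b hab
    by_contra hne
    have h1 : Int.fract (z₀.re + (a : ℝ) * θ) = Int.fract (z₀.re + (b : ℝ) * θ) := by
      rw [← wre a, ← wre b, hab]
    obtain ⟨m, hm⟩ := Int.fract_eq_fract.mp h1
    have hab' : (a : ℝ) ≠ (b : ℝ) := by exact_mod_cast hne
    have hd : ((a : ℝ) - b) ≠ 0 := sub_ne_zero.mpr hab'
    have hθeq : θ = (m : ℝ) / ((a : ℝ) - b) := by
      rw [eq_div_iff hd]
      linear_combination hm
    refine hirr ⟨(m : ℚ) / ((a : ℚ) - b), ?_⟩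
    push_cast
    rw [← hθeq]
  -- accumulation point of the orbit
  have wball : ∀ n, w n ∈ Metric.closedBall (0 : ℂ) (|z₀.im| + 2) := by
    intro n
    rw [Metric.mem_closedBall, dist_zero_right]
    have h1 : ‖w n‖ ≤ |(w n).re| + |(w n).im| :=
      Complex.norm_le_abs_re_add_abs_im _
    have h2 : |(w n).re| ≤ 1 := by
      rw [wre, abs_le]
      constructor
      · linarith [Int.fract_nonneg (z₀.re + (n : ℝ) * θ)]
      · linarith [le_of_lt (Int.fract_lt_one (z₀.re + (n : ℝ) * θ))]
    rw [wim] at h1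
    linarith
  obtain ⟨p, hpmem, φ, hφmono, hφtend⟩ :=
    (isCompact_closedBall (0 : ℂ) (|z₀.im| + 2)).tendsto_subseq wball
  have hpim : p.im = z₀.im := by
    have h1 : Tendsto (fun k => (w (φ k)).im) atTop (𝓝 p.im) :=
      (Complex.continuous_im.tendsto p).comp hφtend
    have h2 : (fun k => (w (φ k)).im) = fun _ => z₀.im := funext fun k => wim _
    rw [h2] at h1
    exact tendsto_nhds_unique h1 tendsto_const_nhds
  have hpstrip : p ∈ Strip τ := by rw [mem_strip, hpim]; exact hz₀
  have hfreq : ∃ᶠ z in 𝓝[≠] p, g z = 0 := by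
    rw [Filter.frequently_iff]
    intro U hU
    rw [mem_nhdsWithin] at hU
    obtain ⟨V, hVopen, hpV, hVU⟩ := hU
    have hev : ∀ᶠ k in atTop, w (φ k) ∈ V := hφtend.eventually (hVopen.mem_nhds hpV)
    obtain ⟨N, hN⟩ := eventually_atTop.mp hev
    by_cases hc : w (φ N) = p
    · refine ⟨w (φ (N + 1)), hVU ⟨hN _ (by omega), ?_⟩, gw _⟩
      intro h
      rw [Set.mem_singleton_iff] at h
      have : φ (N + 1) = φ N := winj (h.trans hc.symm)
      exact absurd this (Nat.ne_of_gt (hφmono (by omega)))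
    · exact ⟨w (φ N), hVU ⟨hN N le_rfl, hc⟩, gw _⟩
  have hg0 : EqOn g 0 (Strip τ) :=
    ganal.eqOn_zero_of_preconnected_of_frequently_eq_zero (strip_preconnected τ)
      hpstrip hfreq
  -- hence Ψ has zero derivative on the strip, contradicting periodicity
  have hzero : ∀ x ∈ Strip τ, HasFDerivWithinAt Ψ (0 : ℂ →L[ℝ] ℂ) (Strip τ) x := by
    intro x hx
    have hd : HasDerivAt Ψ 0 x := by
      have := (hΨdiff.differentiableAt (hSo.mem_nhds hx)).hasDerivAt
      rwa [show deriv Ψ x = 0 from hg0 hx] at this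
    have h' : HasFDerivAt Ψ (0 : ℂ →L[ℂ] ℂ) x := by
      have := hasDerivAt_iff_hasFDerivAt.mp hd
      rwa [show ContinuousLinearMap.toSpanSingleton ℂ (0 : ℂ) = 0 by ext y; simp] at this
    have h'' : HasFDerivWithinAt Ψ ((0 : ℂ →L[ℂ] ℂ).restrictScalars ℝ) (Strip τ) x :=
      (h'.restrictScalars ℝ).hasFDerivWithinAt
    rwa [show (0 : ℂ →L[ℂ] ℂ).restrictScalars ℝ = 0 from rfl] at h''
  have h0mem : (0 : ℂ) ∈ Strip τ := by simpa [mem_strip] using hτ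
  have h1mem : (1 : ℂ) ∈ Strip τ := by simpa [mem_strip] using hτ
  have h01 : ‖Ψ 1 - Ψ 0‖ ≤ 0 * ‖(1 : ℂ) - 0‖ :=
    (strip_convex τ).norm_image_sub_le_of_norm_hasFDerivWithin_le hzero
      (fun x _ => by simp) h0mem h1mem
  have hper := hΨper 0 h0mem
  rw [zero_add] at hper
  rw [zero_mul] at h01
  have : Ψ 1 - Ψ 0 = 0 := norm_le_zero_iff.mp h01
  rw [hper] at this
  simp at this

lemma key_estimate {τ τ'' θ : ℝ} (hτ''pos : 0 < τ'') (hτ''τ : τ'' < τ)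
    (hirr : Irrational θ) {Ψ Φc Fc : ℂ → ℂ}
    (hΨdiff : DifferentiableOn ℂ Ψ (Strip τ))
    (hΨper : ∀ z ∈ Strip τ, Ψ (z + 1) = Ψ z + 1)
    (hΦcΨ : ∀ z ∈ Strip τ, Φc (Ψ z) = z)
    (hFcdiff : DifferentiableOn ℂ Fc (Ψ '' Strip τ))
    (hFclin : ∀ z ∈ Strip τ, Fc (Ψ z) = Ψ (z + (θ : ℂ))) :
    ∃ M : ℝ, 0 ≤ M ∧ ∃ δ : ℝ, 0 < δ ∧ ∀ z : ℂ, |z.im| ≤ τ'' → ∀ s : ℂ, ‖s‖ ≤ δ →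
      ‖Φc (Ψ z + s) - z‖ ≤ M * ‖s‖ := by
  have hτ : 0 < τ := lt_trans hτ''pos hτ''τ
  have hSo := strip_open τ
  have hne := deriv_psi_ne_zero hτ hirr hΨdiff hΨper hFcdiff hFclin
  have hstrict : ∀ z ∈ Strip τ, HasStrictDerivAt Ψ (deriv Ψ z) z := by
    intro z hz
    obtain ⟨pp, hpp⟩ := hΨdiff.analyticAt (hSo.mem_nhds hz)
    have h := hpp.hasStrictDerivAt
    rwa [← hpp.deriv] at h
  have hΩopen : IsOpen (Ψ '' Strip τ) := by
    rw [isOpen_iff_mem_nhds]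
    rintro w ⟨z, hz, rfl⟩
    rw [← (hstrict z hz).map_nhds_eq (hne z hz)]
    exact mem_map.mpr (mem_of_superset (hSo.mem_nhds hz) (subset_preimage_image Ψ _))
  have hΦcdiffat : ∀ w ∈ Ψ '' Strip τ, DifferentiableAt ℂ Φc w := by
    rintro w ⟨z, hz, rfl⟩
    have hev : ∀ᶠ x in 𝓝 z, Φc (Ψ x) = x := by
      filter_upwards [hSo.mem_nhds hz] with x hx
      exact hΦcΨ x hx
    exact (HasStrictDerivAt.hasDerivAt ((hstrict z hz).to_local_left_inverse (hne z hz) hev)).differentiableAt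
  have hΦcdiff : DifferentiableOn ℂ Φc (Ψ '' Strip τ) :=
    fun w hw => (hΦcdiffat w hw).differentiableWithinAt
  have hderivcont : ContinuousOn (deriv Φc) (Ψ '' Strip τ) :=
    ((hΦcdiff.analyticOnNhd hΩopen).deriv).continuousOn
  have Ψint := psi_add_int hΨper
  have hΩint : ∀ w ∈ Ψ '' Strip τ, ∀ m : ℤ,
      w + (m : ℂ) ∈ Ψ '' Strip τ ∧ Φc (w + (m : ℂ)) = Φc w + (m : ℂ) := by
    rintro w ⟨z, hz, rfl⟩ m
    have hzm : z + (m : ℂ) ∈ Strip τ := add_int_mem_strip hz m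
    refine ⟨⟨z + (m : ℂ), hzm, Ψint z hz m⟩, ?_⟩
    rw [← Ψint z hz m, hΦcΨ _ hzm, hΦcΨ _ hz]
  set Q : Set ℂ := {z : ℂ | |z.im| ≤ τ'' ∧ z.re ∈ Icc (0 : ℝ) 1} with hQ
  have hQsub : Q ⊆ Strip τ := fun z hz => lt_of_le_of_lt hz.1 hτ''τ
  have hQclosed : IsClosed Q := by
    apply IsClosed.inter
    · exact isClosed_le (continuous_abs.comp Complex.continuous_im) continuous_const
    · exact isClosed_Icc.preimage Complex.continuous_re
  have hQcpt : IsCompact Q := by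
    refine (isCompact_closedBall (0 : ℂ) (1 + τ'')).of_isClosed_subset hQclosed ?_
    intro z hz
    rw [Metric.mem_closedBall, dist_zero_right]
    have h1 := Complex.norm_le_abs_re_add_abs_im z
    have h2 : |z.re| ≤ 1 := by
      rw [abs_le]; exact ⟨by linarith [hz.2.1], hz.2.2⟩
    linarith [hz.1]
  have hKcpt : IsCompact (Ψ '' Q) := hQcpt.image_of_continuousOn (hΨdiff.continuousOn.mono hQsub)
  have hKΩ : Ψ '' Q ⊆ Ψ '' Strip τ := Set.image_mono hQsub
  obtain ⟨δ, hδpos, hδ⟩ := hKcpt.exists_thickening_subset_open hΩopen hKΩ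
  have hK'cpt : IsCompact (Metric.cthickening (δ / 2) (Ψ '' Q)) := hKcpt.cthickening
  have hK'Ω : Metric.cthickening (δ / 2) (Ψ '' Q) ⊆ Ψ '' Strip τ :=
    le_trans (Metric.cthickening_subset_thickening' hδpos (half_lt_self hδpos) _) hδ
  obtain ⟨M₀, hM₀⟩ := hK'cpt.exists_bound_of_continuousOn (hderivcont.mono hK'Ω)
  refine ⟨max M₀ 0, le_max_right _ _, δ / 2, half_pos hδpos, ?_⟩
  have base : ∀ z ∈ Q, ∀ s : ℂ, ‖s‖ ≤ δ / 2 → ‖Φc (Ψ z + s) - z‖ ≤ max M₀ 0 * ‖s‖ := by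
    intro z hzQ s hs
    have hzs : z ∈ Strip τ := hQsub hzQ
    have hball : Metric.closedBall (Ψ z) (δ / 2) ⊆ Metric.cthickening (δ / 2) (Ψ '' Q) :=
      Metric.closedBall_subset_cthickening (mem_image_of_mem Ψ hzQ) _
    have hballΩ : Metric.closedBall (Ψ z) (δ / 2) ⊆ Ψ '' Strip τ := le_trans hball hK'Ω
    have hdf : ∀ x ∈ Metric.closedBall (Ψ z) (δ / 2),
        HasFDerivWithinAt Φc ((fderiv ℂ Φc x).restrictScalars ℝ)
          (Metric.closedBall (Ψ z) (δ / 2)) x := fun x hx =>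
      (((hΦcdiffat x (hballΩ hx)).hasFDerivAt).restrictScalars ℝ).hasFDerivWithinAt
    have hbound : ∀ x ∈ Metric.closedBall (Ψ z) (δ / 2),
        ‖(fderiv ℂ Φc x).restrictScalars ℝ‖ ≤ max M₀ 0 := by
      intro x hx
      rw [ContinuousLinearMap.norm_restrictScalars, ← toSpanSingleton_deriv,
        ContinuousLinearMap.norm_toSpanSingleton]
      have h1 : ‖(1 : ℂ →L[ℂ] ℂ)‖ = 1 := by
        rw [ContinuousLinearMap.one_def, ContinuousLinearMap.norm_id]
      exact le_trans (hM₀ x (hball hx)) (le_max_left _ _)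
    have hx0 : Ψ z ∈ Metric.closedBall (Ψ z) (δ / 2) :=
      Metric.mem_closedBall_self (by positivity)
    have hx1 : Ψ z + s ∈ Metric.closedBall (Ψ z) (δ / 2) := by
      rw [Metric.mem_closedBall]
      simpa [dist_eq_norm] using hs
    have hmvt := (convex_closedBall (Ψ z) (δ / 2)).norm_image_sub_le_of_norm_hasFDerivWithin_le
      hdf hbound hx0 hx1
    rw [hΦcΨ z hzs] at hmvt
    simpa using hmvt
  intro z hz s hs
  set m : ℤ := ⌊z.re⌋ with hm
  have hz' : z - (m : ℂ) ∈ Q := by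
    constructor
    · show |(z - (m : ℂ)).im| ≤ τ''
      simpa using hz
    · show (z - (m : ℂ)).re ∈ Icc (0 : ℝ) 1
      have h1 : (z - (m : ℂ)).re = Int.fract z.re := by
        rw [Int.fract, hm]
        simp
      rw [h1]
      exact ⟨Int.fract_nonneg _, le_of_lt (Int.fract_lt_one _)⟩
  have hz's : z - (m : ℂ) ∈ Strip τ := hQsub hz'
  have hΨzm : Ψ z = Ψ (z - (m : ℂ)) + (m : ℂ) := by
    have h := Ψint (z - (m : ℂ)) hz's m
    rwa [sub_add_cancel] at h
  have hΩmem : Ψ (z - (m : ℂ)) + s ∈ Ψ '' Strip τ := by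
    apply hδ
    rw [Metric.mem_thickening_iff]
    exact ⟨Ψ (z - (m : ℂ)), mem_image_of_mem Ψ hz',
      by simpa [dist_eq_norm] using lt_of_le_of_lt hs (half_lt_self hδpos)⟩
  have hΦeq : Φc (Ψ z + s) = Φc (Ψ (z - (m : ℂ)) + s) + (m : ℂ) := by
    rw [show Ψ z + s = (Ψ (z - (m : ℂ)) + s) + (m : ℂ) by rw [hΨzm]; ring]
    exact (hΩint _ hΩmem m).2
  have hb := base (z - (m : ℂ)) hz' s hs
  calc ‖Φc (Ψ z + s) - z‖ = ‖Φc (Ψ (z - (m : ℂ)) + s) - (z - (m : ℂ))‖ := by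
        rw [hΦeq]; congr 1; ring
    _ ≤ max M₀ 0 * ‖s‖ := hb


/-- Lemma 3 of the paper: with `t_n ∈ I(p_n/q_n)` and
`H_n = Φ_F ∘ F_{t_n} ∘ Ψ_F` on `S(τ')`, for all large `n` the iterates
`H_n^{∘k}`, `k ≤ q_n`, are defined on `S(τ')` with values in `S(τ)`, and
`sup_{w ∈ S(τ')} |H_n^{∘q_n}(w) - w - q_n θ| → 0`. -/
theorem conjugated_iterates_defined_and_close_to_translation
    (F : ℝ → ℝ)
    (hFanal : ∀ x : ℝ, AnalyticAt ℝ F x)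
    (hFmono : StrictMono F)
    (hFbij : Function.Bijective F)
    (hFderiv : ∀ x : ℝ, 0 < deriv F x)
    (hFper : ∀ x : ℝ, F (x + 1) = F x + 1)
    -- translation numbers of the translated family `F_t = F + t`
    (T : ℝ → ℝ)
    (hT : ∀ t x : ℝ, Tendsto (fun n : ℕ => ((fun y => F y + t)^[n] x - x) / n)
      atTop (𝓝 (T t)))
    (θ : ℝ) (hθ : T 0 = θ) (hirr : Irrational θ)
    -- Herman strip of modulus `2τ`
    (τ : ℝ) (hτ : 0 < τ)
    (Φ : ℝ → ℝ) (hΦmono : StrictMono Φ)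
    (hΦper : ∀ x : ℝ, Φ (x + 1) = Φ x + 1)
    (hΦconj : ∀ x : ℝ, Φ (F x) = Φ x + θ)
    (Ψ : ℂ → ℂ)
    (hΨΦ : ∀ x : ℝ, Ψ ((Φ x : ℝ) : ℂ) = (x : ℂ))
    (hΨdiff : DifferentiableOn ℂ Ψ (Strip τ))
    (hΨinj : Set.InjOn Ψ (Strip τ))
    (hΨper : ∀ z ∈ Strip τ, Ψ (z + 1) = Ψ z + 1)
    -- the complex extension `Φc` of `Φ_F`, inverse of `Ψ` on the Herman strip
    (Φc : ℂ → ℂ)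
    (hΦcreal : ∀ x : ℝ, Φc (x : ℂ) = ((Φ x : ℝ) : ℂ))
    (hΦcΨ : ∀ z ∈ Strip τ, Φc (Ψ z) = z)
    (Fc : ℂ → ℂ)
    (hFcreal : ∀ x : ℝ, Fc (x : ℂ) = ((F x : ℝ) : ℂ))
    (hFcdiff : DifferentiableOn ℂ Fc (Ψ '' Strip τ))
    (hFcper : ∀ z ∈ Ψ '' Strip τ, Fc (z + 1) = Fc z + 1)
    (hFclin : ∀ z ∈ Strip τ, Fc (Ψ z) = Ψ (z + (θ : ℂ)))
    -- `τ' < τ'' < τ`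
    (τ' τ'' : ℝ) (hτ'pos : 0 < τ') (hτ'τ'' : τ' < τ'') (hτ''τ : τ'' < τ)
    -- continued fraction convergents `p_n/q_n` of `θ`
    (pn : ℕ → ℤ) (qn : ℕ → ℕ)
    (hqpos : ∀ n, 0 < qn n)
    (hqtend : Tendsto qn atTop atTop)
    (hcop : ∀ n, Nat.Coprime (pn n).natAbs (qn n))
    (hconv : ∀ n, |θ - (pn n : ℝ) / (qn n : ℝ)| ≤ 1 / (qn n : ℝ) ^ 2)
    -- parameters `t_n ∈ I(p_n/q_n)`, with the bound coming from Herman's theorem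
    (t : ℕ → ℝ) (ht : ∀ n, T (t n) = (pn n : ℝ) / (qn n : ℝ))
    (C₃ : ℝ) (hC₃ : 0 < C₃)
    (htbound : ∀ n, |t n| ≤ C₃ * |θ - (pn n : ℝ) / (qn n : ℝ)|) :
    (∃ N : ℕ, ∀ n ≥ N, ∀ k ≤ qn n,
      Set.MapsTo ((fun w : ℂ => Φc (Fc (Ψ w) + ((t n : ℝ) : ℂ)))^[k])
        (Strip τ') (Strip τ))
    ∧ TendstoUniformlyOn
        (fun n w => (fun w : ℂ => Φc (Fc (Ψ w) + ((t n : ℝ) : ℂ)))^[qn n] w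
          - w - (qn n : ℂ) * (θ : ℂ))
        (fun _ => 0) atTop (Strip τ') := by

  classical
  have hτ''pos : 0 < τ'' := lt_trans hτ'pos hτ'τ''
  obtain ⟨M, hM, δ, hδpos, hkey⟩ :=
    key_estimate hτ''pos hτ''τ hirr hΨdiff hΨper hΦcΨ hFcdiff hFclin
  have hqpos' : ∀ n, (0 : ℝ) < (qn n : ℝ) := fun n => by exact_mod_cast hqpos n
  have hqone : ∀ n, (1 : ℝ) ≤ (qn n : ℝ) := fun n => by exact_mod_cast hqpos n
  have htn : ∀ n, |t n| ≤ C₃ / (qn n : ℝ) ^ 2 := by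
    intro n
    refine le_trans (htbound n) ?_
    calc C₃ * |θ - (pn n : ℝ) / (qn n : ℝ)| ≤ C₃ * (1 / (qn n : ℝ) ^ 2) :=
          mul_le_mul_of_nonneg_left (hconv n) hC₃.le
      _ = C₃ / (qn n : ℝ) ^ 2 := by ring
  have htabs : ∀ n, (0 : ℝ) ≤ |t n| := fun n => abs_nonneg _
  -- the imaginary-part bound
  have imbound : ∀ (u w : ℂ) (k : ℕ) (b : ℝ), w ∈ Strip τ' →
      ‖u - w - (k : ℂ) * (θ : ℂ)‖ ≤ b → b ≤ τ'' - τ' → |u.im| < τ'' := by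
    intro u w k b hw hb hb2
    have h3 : u.im = w.im + (u - w - (k : ℂ) * (θ : ℂ)).im := by
      simp [Complex.sub_im, Complex.mul_im]
    have h4 : |(u - w - (k : ℂ) * (θ : ℂ)).im| ≤ ‖u - w - (k : ℂ) * (θ : ℂ)‖ :=
      le_trans (Complex.abs_im_le_norm _) le_rfl
    have hw' : |w.im| < τ' := hw
    calc |u.im| ≤ |w.im| + |(u - w - (k : ℂ) * (θ : ℂ)).im| := by
          rw [h3]; exact abs_add_le _ _
      _ < τ' + b := by linarith [le_trans h4 hb]
      _ ≤ τ'' := by linarith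
  -- the main iteration estimate
  have iter : ∀ n : ℕ, |t n| ≤ δ → (qn n : ℝ) * (M * |t n|) ≤ τ'' - τ' →
      ∀ k, k ≤ qn n → ∀ w ∈ Strip τ',
      ‖(fun w : ℂ => Φc (Fc (Ψ w) + ((t n : ℝ) : ℂ)))^[k] w - w - (k : ℂ) * (θ : ℂ)‖
        ≤ (k : ℝ) * (M * |t n|) := by
    intro n h1 h2 k
    induction k with
    | zero => intro _ w hw; simp
    | succ k ih =>
      intro hk w hw
      have hk' : k ≤ qn n := Nat.le_of_succ_le hk
      have hb := ih hk' w hw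
      set u := (fun w : ℂ => Φc (Fc (Ψ w) + ((t n : ℝ) : ℂ)))^[k] w with hu
      have hkq : (k : ℝ) * (M * |t n|) ≤ (qn n : ℝ) * (M * |t n|) := by
        apply mul_le_mul_of_nonneg_right
        · exact_mod_cast hk'
        · positivity
      have him : |u.im| < τ'' := imbound u w k ((qn n : ℝ) * (M * |t n|)) hw
        (le_trans hb hkq) h2
      have hustrip : u ∈ Strip τ := lt_trans him hτ''τ
      have himθ : |(u + (θ : ℂ)).im| ≤ τ'' := by
        have : (u + (θ : ℂ)).im = u.im := by simp
        rw [this]; exact le_of_lt him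
      have hnorm_t : ‖((t n : ℝ) : ℂ)‖ ≤ δ := by
        rw [Complex.norm_real, Real.norm_eq_abs]; exact h1
      have hk2 := hkey (u + (θ : ℂ)) himθ ((t n : ℝ) : ℂ) hnorm_t
      rw [Complex.norm_real, Real.norm_eq_abs] at hk2
      rw [Function.iterate_succ_apply', ← hu]
      show ‖Φc (Fc (Ψ u) + ((t n : ℝ) : ℂ)) - w - ((k + 1 : ℕ) : ℂ) * (θ : ℂ)‖
        ≤ ((k + 1 : ℕ) : ℝ) * (M * |t n|)
      rw [hFclin u hustrip]
      have hsplit : Φc (Ψ (u + (θ : ℂ)) + ((t n : ℝ) : ℂ)) - w - ((k + 1 : ℕ) : ℂ) * (θ : ℂ)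
          = (Φc (Ψ (u + (θ : ℂ)) + ((t n : ℝ) : ℂ)) - (u + (θ : ℂ)))
            + (u - w - (k : ℂ) * (θ : ℂ)) := by
        push_cast; ring
      rw [hsplit]
      calc ‖_ + _‖ ≤ ‖Φc (Ψ (u + (θ : ℂ)) + ((t n : ℝ) : ℂ)) - (u + (θ : ℂ))‖
            + ‖u - w - (k : ℂ) * (θ : ℂ)‖ := norm_add_le _ _
        _ ≤ M * |t n| + (k : ℝ) * (M * |t n|) := add_le_add hk2 hb
        _ = ((k + 1 : ℕ) : ℝ) * (M * |t n|) := by push_cast; ring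
  -- choice of N
  obtain ⟨R, hR⟩ := exists_nat_ge (max (C₃ / δ) (M * C₃ / (τ'' - τ')))
  obtain ⟨N, hN⟩ := eventually_atTop.mp (hqtend.eventually_ge_atTop R)
  have hcond : ∀ n, N ≤ n → |t n| ≤ δ ∧ (qn n : ℝ) * (M * |t n|) ≤ M * C₃ / (qn n : ℝ)
      ∧ M * C₃ / (qn n : ℝ) ≤ τ'' - τ' := by
    intro n hn
    have hq : (R : ℝ) ≤ (qn n : ℝ) := by exact_mod_cast hN n hn
    have hq1 := hqone n
    have hqp := hqpos' n
    have hqR1 : C₃ / δ ≤ (qn n : ℝ) := le_trans (le_trans (le_max_left _ _) hR) hq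
    have hqR2 : M * C₃ / (τ'' - τ') ≤ (qn n : ℝ) := le_trans (le_trans (le_max_right _ _) hR) hq
    have hττ : (0 : ℝ) < τ'' - τ' := by linarith
    refine ⟨?_, ?_, ?_⟩
    · refine le_trans (htn n) ?_
      have h1 : C₃ / (qn n : ℝ) ^ 2 ≤ C₃ / (qn n : ℝ) := by
        apply div_le_div_of_nonneg_left hC₃.le hqp
        nlinarith
      refine le_trans h1 ?_
      rw [div_le_iff₀ hqp]
      rw [div_le_iff₀ hδpos] at hqR1
      linarith
    · have h1 : (qn n : ℝ) * (M * |t n|) ≤ (qn n : ℝ) * (M * (C₃ / (qn n : ℝ) ^ 2)) := by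
        apply mul_le_mul_of_nonneg_left _ hqp.le
        exact mul_le_mul_of_nonneg_left (htn n) hM
      refine le_trans h1 (le_of_eq ?_)
      field_simp
    · rw [div_le_iff₀ hqp]
      rw [div_le_iff₀ hττ] at hqR2
      linarith
  constructor
  · -- the iterates stay in the strip
    refine ⟨N, fun n hn k hk w hw => ?_⟩
    obtain ⟨c1, c2, c3⟩ := hcond n hn
    have hb := iter n c1 (le_trans c2 c3) k hk w hw
    have hkq : (k : ℝ) * (M * |t n|) ≤ (qn n : ℝ) * (M * |t n|) := by
      apply mul_le_mul_of_nonneg_right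
      · exact_mod_cast hk
      · positivity
    have him := imbound _ w k ((qn n : ℝ) * (M * |t n|)) hw (le_trans hb hkq)
      (le_trans c2 c3)
    exact lt_trans him hτ''τ
  · -- uniform convergence
    rw [Metric.tendstoUniformlyOn_iff]
    intro ε hε
    obtain ⟨R₂, hR₂⟩ := exists_nat_ge (M * C₃ / ε + 1)
    have hMC : (0 : ℝ) ≤ M * C₃ := by positivity
    have hR₂pos : (0 : ℝ) < (R₂ : ℝ) := by
      have : (0 : ℝ) < M * C₃ / ε + 1 := by positivity
      linarith
    filter_upwards [hqtend.eventually_ge_atTop R₂, eventually_ge_atTop N] with n hn2 hnN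
    intro w hw
    obtain ⟨c1, c2, c3⟩ := hcond n hnN
    have hb := iter n c1 (le_trans c2 c3) (qn n) le_rfl w hw
    have hq2 : (R₂ : ℝ) ≤ (qn n : ℝ) := by exact_mod_cast hn2
    have hqp := hqpos' n
    have h5 : M * C₃ / (qn n : ℝ) < ε := by
      rw [div_lt_iff₀ hqp]
      have h6 : M * C₃ < ε * (R₂ : ℝ) := by
        have h7 : ε * (M * C₃ / ε + 1) ≤ ε * (R₂ : ℝ) :=
          mul_le_mul_of_nonneg_left hR₂ hε.le
        have h8 : ε * (M * C₃ / ε + 1) = M * C₃ + ε := by field_simp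
        linarith
      have h9 : ε * (R₂ : ℝ) ≤ ε * (qn n : ℝ) := mul_le_mul_of_nonneg_left hq2 hε.le
      linarith
    rw [dist_comm, dist_eq_norm]
    simp only [sub_zero]
    exact lt_of_le_of_lt (le_trans hb c2) h5
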